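/- Every surjective distance-decreasing self-map of a compact metric space is an isometry: if X is a compact metric space and f : X → X is 1-Lipschitz (dist(f x, f x') ≤ dist(x, x') for all x, x') and surjective, then f is an isometry. -/

import Mathlib

/-- Recurrence lemma: a surjective 1-Lipschitz self-map of a compact metric space
almost returns every point to itself. -/
lemma almost_periodic {Y : Type*} [MetricSpace Y] [CompactSpace Y]
    (g : Y → Y) (hg : LipschitzWith 1 g) (hs : Function.Surjective g) (p : Y)
    {ε : ℝ} (hε : 0 < ε) : ∃ n ≥ 1, dist (g^[n] p) p < ε := by
  -- backward orbit
  choose inv hinv using hs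
  set q : ℕ → Y := fun k => inv^[k] p with hq
  have hgq : ∀ k, g^[k] (q k) = p := by
    intro k
    induction k with
    | zero => simp [hq]
    | succ k ih =>
      have : q (k + 1) = inv (q k) := by
        simp [hq, Function.iterate_succ_apply']
      rw [Function.iterate_succ_apply, this, hinv, ih]
  obtain ⟨a, φ, hmono, hlim⟩ := CompactSpace.tendsto_subseq q
  have hc : CauchySeq (q ∘ φ) := hlim.cauchySeq
  rw [Metric.cauchySeq_iff] at hc
  obtain ⟨N, hN⟩ := hc ε hε
  have hij : φ N < φ (N + 1) := hmono (by omega)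
  refine ⟨φ (N + 1) - φ N, by omega, ?_⟩
  have key : dist (g^[φ (N+1)] (q (φ N))) (g^[φ (N+1)] (q (φ (N+1)))) ≤ dist (q (φ N)) (q (φ (N+1))) := by
    simpa using (hg.iterate (φ (N+1))).dist_le_mul (q (φ N)) (q (φ (N+1)))
  have h1 : g^[φ (N+1)] (q (φ N)) = g^[φ (N+1) - φ N] p := by
    have : φ (N+1) = (φ (N+1) - φ N) + φ N := by omega
    conv_lhs => rw [this, Function.iterate_add_apply, hgq]
  rw [h1, hgq] at key
  exact lt_of_le_of_lt key (hN N le_rfl (N+1) (by omega))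

/-- Every surjective 1-Lipschitz self-map of a compact metric space is an isometry. -/
theorem surjective_lipschitz_isometry (X : Type*) [MetricSpace X] [CompactSpace X]
    (f : X → X) (hf : LipschitzWith 1 f) (hs : Function.Surjective f) : Isometry f := by
  apply Isometry.of_dist_eq
  intro x y
  refine le_antisymm (by simpa using hf.dist_le_mul x y) ?_
  -- work on X × X
  refine le_of_forall_pos_le_add fun ε hε => ?_
  have hG : LipschitzWith 1 (Prod.map f f) := by
    have := (hf.comp LipschitzWith.prod_fst).prodMk (hf.comp LipschitzWith.prod_snd)
    simp at this
    exact this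
  have hGs : Function.Surjective (Prod.map f f) := hs.prodMap hs
  obtain ⟨n, hn1, hn⟩ := almost_periodic (Prod.map f f) hG hGs (x, y) (half_pos hε)
  have hiter : (Prod.map f f)^[n] (x, y) = (f^[n] x, f^[n] y) := by
    induction n with
    | zero => simp
    | succ k ih => simp [Function.iterate_succ_apply', ih]
  rw [hiter, Prod.dist_eq, max_lt_iff] at hn
  have h1 : dist (f^[n] x) (f^[n] y) ≤ dist (f x) (f y) := by
    obtain ⟨m, rfl⟩ := Nat.exists_eq_add_of_le hn1
    rw [add_comm, Function.iterate_add_apply, Function.iterate_add_apply,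
      Function.iterate_one]
    simpa using (hf.iterate m).dist_le_mul (f x) (f y)
  calc dist x y ≤ dist x (f^[n] x) + dist (f^[n] x) (f^[n] y) + dist (f^[n] y) y :=
        dist_triangle4 x (f^[n] x) (f^[n] y) y
    _ ≤ ε/2 + dist (f x) (f y) + ε/2 := by
        rw [dist_comm x]
        have := hn.1.le
        have := hn.2.le
        gcongr
    _ = dist (f x) (f y) + ε := by ring
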